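/- Let N be a nilpotent subgroup of SL(2, ℝ) and let A ∈ N satisfy |trace A| > 2. Then A has two distinct real eigenvalues λ and λ⁻¹, with corresponding one-dimensional eigenspaces (lines) L₁, L₂ ⊆ ℝ², and for every B ∈ N the pair of lines is preserved: either B(L₁) = L₁ and B(L₂) = L₂, or B(L₁) = L₂ and B(L₂) = L₁ (images taken as subspaces under the linear map determined by B). -/

import Mathlib

open MatrixGroups Module


lemma stmt10_scalars {lam : ℝ} (hne : lam ≠ lam⁻¹) :
    lam ≠ 0 ∧ lam ^ 2 ≠ 1 ∧ (lam⁻¹) ^ 2 ≠ 1 ∧ lam ^ 2 ≠ (lam⁻¹) ^ 2 := by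
  have h0 : lam ≠ 0 := by rintro rfl; simp at hne
  have h1 : lam ^ 2 ≠ 1 := by
    intro h; apply hne; field_simp; linear_combination h
  refine ⟨h0, h1, ?_, ?_⟩
  · intro h; apply h1
    have : (lam * lam⁻¹) ^ 2 = lam ^ 2 * (lam⁻¹) ^ 2 := by ring
    rw [mul_inv_cancel₀ h0] at this
    rw [h, mul_one] at this; simpa using this.symm
  · intro h
    have h4 : (lam ^ 2) ^ 2 = 1 := by
      have : (lam * lam⁻¹) ^ 2 = lam ^ 2 * (lam⁻¹) ^ 2 := by ring
      rw [mul_inv_cancel₀ h0] at this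
      calc (lam ^ 2) ^ 2 = lam ^ 2 * lam ^ 2 := by ring
        _ = lam ^ 2 * (lam⁻¹) ^ 2 := by rw [← h]
        _ = 1 := by rw [← this]; norm_num
    have hfac : (lam ^ 2 - 1) * (lam ^ 2 + 1) = 0 := by linear_combination h4
    rcases mul_eq_zero.mp hfac with h | h
    · exact h1 (by linear_combination h)
    · nlinarith [sq_nonneg lam]

lemma stmt10_badstep {lam a b c d : ℝ} (hne : lam ≠ lam⁻¹)
    (hdet : a * d - b * c = 1) (hbc : ¬(b = 0 ∧ c = 0)) (had : ¬(a = 0 ∧ d = 0)) :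
    (a * d - lam⁻¹ ^ 2 * (b * c)) * (a * d - lam ^ 2 * (b * c)) -
        (a * b * (1 - lam ^ 2)) * (c * d * (1 - lam⁻¹ ^ 2)) = 1 ∧
      ¬(a * b * (1 - lam ^ 2) = 0 ∧ c * d * (1 - lam⁻¹ ^ 2) = 0) ∧
      ¬(a * d - lam⁻¹ ^ 2 * (b * c) = 0 ∧ a * d - lam ^ 2 * (b * c) = 0) := by
  obtain ⟨h0, h1, h1', hsq⟩ := stmt10_scalars hne
  have hmul : lam * lam⁻¹ = 1 := mul_inv_cancel₀ h0
  refine ⟨?_, ?_, ?_⟩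
  · linear_combination (a * d - b * c + 1) * hdet +
      (lam * lam⁻¹ + 1) * (b * c) * (b * c - a * d) * hmul
  · rintro ⟨hb', hc'⟩
    have hab : a * b = 0 := by
      rcases mul_eq_zero.mp hb' with h | h
      · exact h
      · exact absurd (by linear_combination -h) h1
    have hcd : c * d = 0 := by
      rcases mul_eq_zero.mp hc' with h | h
      · exact h
      · exact absurd (by linear_combination -h) h1'
    rcases mul_eq_zero.mp hab with ha | hb
    · -- a = 0
      have hbne : b ≠ 0 := by intro hb; rw [ha, hb] at hdet; simp at hdet
      have hcne : c ≠ 0 := by intro hc; rw [ha, hc] at hdet; simp at hdet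
      have hdne : d ≠ 0 := fun hd => had ⟨ha, hd⟩
      rcases mul_eq_zero.mp hcd with h | h
      exacts [hcne h, hdne h]
    · -- b = 0
      have hcne : c ≠ 0 := fun hc => hbc ⟨hb, hc⟩
      have hdne : d ≠ 0 := by intro hd; rw [hb, hd] at hdet; simp at hdet
      rcases mul_eq_zero.mp hcd with h | h
      exacts [hcne h, hdne h]
  · rintro ⟨ha', hd'⟩
    have : (lam ^ 2 - lam⁻¹ ^ 2) * (b * c) = 0 := by linear_combination ha' - hd'
    have hbc0 : b * c = 0 := by
      rcases mul_eq_zero.mp this with h | h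
      · exact absurd (by linear_combination h) hsq
      · exact h
    rw [hbc0, mul_zero, sub_zero] at ha'
    rw [hbc0] at hdet
    simp at hdet
    rw [hdet] at ha'; exact one_ne_zero ha'
open MatrixGroups Module

lemma stmt10_exists_lam {t : ℝ} (ht : 2 < |t|) :
    ∃ lam : ℝ, lam ^ 2 - t * lam + 1 = 0 ∧ lam ≠ lam⁻¹ := by
  have ht4 : 4 < t ^ 2 := by nlinarith [sq_abs t, abs_nonneg t]
  have hs2 : Real.sqrt (t ^ 2 - 4) ^ 2 = t ^ 2 - 4 := Real.sq_sqrt (by linarith)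
  have hspos : 0 < Real.sqrt (t ^ 2 - 4) := Real.sqrt_pos.mpr (by linarith)
  have hq : ((t + Real.sqrt (t ^ 2 - 4)) / 2) ^ 2 - t * ((t + Real.sqrt (t ^ 2 - 4)) / 2) + 1
      = 0 := by linear_combination hs2 / 4
  refine ⟨(t + Real.sqrt (t ^ 2 - 4)) / 2, hq, ?_⟩
  intro h
  have h0 : (t + Real.sqrt (t ^ 2 - 4)) / 2 ≠ 0 := by
    intro h'; rw [h'] at hq; norm_num at hq
  have h2 : ((t + Real.sqrt (t ^ 2 - 4)) / 2) ^ 2 = 1 := by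
    rw [sq]; nth_rewrite 2 [h]; exact mul_inv_cancel₀ h0
  have h3 : t * ((t + Real.sqrt (t ^ 2 - 4)) / 2) = 2 := by linear_combination h2 - hq
  have h4 : t ^ 2 = 4 := by
    linear_combination (t * ((t + Real.sqrt (t ^ 2 - 4)) / 2) + 2) * h3 - t ^ 2 * h2
  linarith

lemma stmt10_eigvec (A : SL(2, ℝ)) {lam : ℝ}
    (hq : lam ^ 2 - Matrix.trace (A : Matrix (Fin 2) (Fin 2) ℝ) * lam + 1 = 0) :
    ∃ v : Fin 2 → ℝ, v ≠ 0 ∧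
      Matrix.toLin' ((A : Matrix (Fin 2) (Fin 2) ℝ)) v = lam • v := by
  have hdetA : Matrix.det (A : Matrix (Fin 2) (Fin 2) ℝ) = 1 := A.2
  rw [Matrix.det_fin_two] at hdetA
  rw [Matrix.trace_fin_two] at hq
  have hdet1 : ((A : Matrix (Fin 2) (Fin 2) ℝ) - lam • 1).det = 0 := by
    rw [Matrix.det_fin_two]
    simp only [Matrix.sub_apply, Matrix.smul_apply, Matrix.one_apply_eq,
      Matrix.one_apply_ne (by decide : (0 : Fin 2) ≠ 1),
      Matrix.one_apply_ne (by decide : (1 : Fin 2) ≠ 0), smul_eq_mul,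
      mul_one, mul_zero, sub_zero]
    linear_combination hdetA + hq
  obtain ⟨v, hvne, hv0⟩ := Matrix.exists_mulVec_eq_zero_iff.mpr hdet1
  refine ⟨v, hvne, ?_⟩
  rw [Matrix.toLin'_apply]
  rw [Matrix.sub_mulVec, Matrix.smul_mulVec, Matrix.one_mulVec, sub_eq_zero] at hv0
  exact hv0

open MatrixGroups Module
open scoped commutatorElement

/-- The linear map on `ℝ²` induced by an element of `SL(2, ℝ)`. -/
def stmt10toL (C : SL(2, ℝ)) : (Fin 2 → ℝ) →ₗ[ℝ] (Fin 2 → ℝ) :=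
  Matrix.toLin' (C : Matrix (Fin 2) (Fin 2) ℝ)

lemma stmt10toL_mul (C D : SL(2, ℝ)) (v : Fin 2 → ℝ) :
    stmt10toL (C * D) v = stmt10toL C (stmt10toL D v) := by
  simp [stmt10toL, Matrix.SpecialLinearGroup.coe_mul, Matrix.toLin'_mul]

lemma stmt10toL_one (v : Fin 2 → ℝ) : stmt10toL (1 : SL(2, ℝ)) v = v := by
  simp [stmt10toL, Matrix.SpecialLinearGroup.coe_one]

lemma stmt10toL_inv (C : SL(2, ℝ)) (v w : Fin 2 → ℝ) (h : stmt10toL C v = w) :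
    stmt10toL C⁻¹ w = v := by
  rw [← h, ← stmt10toL_mul, inv_mul_cancel, stmt10toL_one]

lemma stmt10toL_det (C : SL(2, ℝ)) : LinearMap.det (stmt10toL C) = 1 := by
  rw [stmt10toL, LinearMap.det_toLin', C.2]

lemma stmt10_comm (A C : SL(2, ℝ)) {lam a b c d : ℝ} {v₁ v₂ : Fin 2 → ℝ}
    (h0 : lam ≠ 0)
    (hA1 : stmt10toL A v₁ = lam • v₁) (hA2 : stmt10toL A v₂ = lam⁻¹ • v₂)
    (h1 : stmt10toL C v₁ = a • v₁ + c • v₂) (h2 : stmt10toL C v₂ = b • v₁ + d • v₂)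
    (hdet : a * d - b * c = 1) :
    stmt10toL ⁅C, A⁆ v₁ =
        (a * d - lam⁻¹ ^ 2 * (b * c)) • v₁ + (c * d * (1 - lam⁻¹ ^ 2)) • v₂ ∧
      stmt10toL ⁅C, A⁆ v₂ =
        (a * b * (1 - lam ^ 2)) • v₁ + (a * d - lam ^ 2 * (b * c)) • v₂ := by
  have hmul : lam * lam⁻¹ = 1 := mul_inv_cancel₀ h0
  have hAi1 : stmt10toL A⁻¹ v₁ = lam⁻¹ • v₁ := by
    refine stmt10toL_inv A _ _ ?_
    rw [map_smul, hA1]; match_scalars; linear_combination hmul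
  have hAi2 : stmt10toL A⁻¹ v₂ = lam • v₂ := by
    refine stmt10toL_inv A _ _ ?_
    rw [map_smul, hA2]; match_scalars; linear_combination hmul
  have hCi1 : stmt10toL C⁻¹ v₁ = d • v₁ - c • v₂ := by
    refine stmt10toL_inv C _ _ ?_
    rw [map_sub, map_smul, map_smul, h1, h2]
    match_scalars
    · linear_combination hdet
    · ring
  have hCi2 : stmt10toL C⁻¹ v₂ = (-b) • v₁ + a • v₂ := by
    refine stmt10toL_inv C _ _ ?_
    rw [map_add, map_smul, map_smul, h1, h2]
    match_scalars
    · ring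
    · linear_combination hdet
  have e1 : ∀ v, stmt10toL ⁅C, A⁆ v =
      stmt10toL C (stmt10toL A (stmt10toL C⁻¹ (stmt10toL A⁻¹ v))) := by
    intro v
    rw [commutatorElement_def, stmt10toL_mul, stmt10toL_mul, stmt10toL_mul]
  constructor
  · have s2 : stmt10toL C⁻¹ (stmt10toL A⁻¹ v₁) = (lam⁻¹ * d) • v₁ - (lam⁻¹ * c) • v₂ := by
      rw [hAi1, map_smul, hCi1]; module
    have s3 : stmt10toL A ((lam⁻¹ * d) • v₁ - (lam⁻¹ * c) • v₂) =
        (lam⁻¹ * d * lam) • v₁ - (lam⁻¹ * c * lam⁻¹) • v₂ := by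
      rw [map_sub, map_smul, map_smul, hA1, hA2]; module
    rw [e1, s2, s3, map_sub, map_smul, map_smul, h1, h2]
    match_scalars
    · linear_combination a * d * hmul
    · linear_combination c * d * hmul
  · have s2 : stmt10toL C⁻¹ (stmt10toL A⁻¹ v₂) = (lam * (-b)) • v₁ + (lam * a) • v₂ := by
      rw [hAi2, map_smul, hCi2]; module
    have s3 : stmt10toL A ((lam * (-b)) • v₁ + (lam * a) • v₂) =
        (lam * (-b) * lam) • v₁ + (lam * a * lam⁻¹) • v₂ := by
      rw [map_add, map_smul, map_smul, hA1, hA2]; module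
    rw [e1, s2, s3, map_add, map_smul, map_smul, h1, h2]
    match_scalars
    · linear_combination a * b * hmul
    · linear_combination a * d * hmul

/-- in a nilpotent subgroup of SL(2, ℝ), every element preserves
the pair of eigenlines of a hyperbolic element. -/
theorem stmt_10 (N : Subgroup SL(2, ℝ)) [Group.IsNilpotent N]
    (A : SL(2, ℝ)) (hA : A ∈ N)
    (htr : 2 < |Matrix.trace (A : Matrix (Fin 2) (Fin 2) ℝ)|) :
    ∃ lam : ℝ, lam ≠ lam⁻¹ ∧
      Module.End.HasEigenvalue (Matrix.toLin' ((A : Matrix (Fin 2) (Fin 2) ℝ))) lam ∧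
      Module.End.HasEigenvalue (Matrix.toLin' ((A : Matrix (Fin 2) (Fin 2) ℝ))) lam⁻¹ ∧
      (∀ L₁ L₂ : Submodule ℝ (Fin 2 → ℝ),
        L₁ = Module.End.eigenspace (Matrix.toLin' ((A : Matrix (Fin 2) (Fin 2) ℝ))) lam →
        L₂ = Module.End.eigenspace (Matrix.toLin' ((A : Matrix (Fin 2) (Fin 2) ℝ))) lam⁻¹ →
        Module.finrank ℝ L₁ = 1 ∧ Module.finrank ℝ L₂ = 1 ∧
          ∀ B ∈ N,
            (Submodule.map (Matrix.toLin' ((B : Matrix (Fin 2) (Fin 2) ℝ))) L₁ = L₁ ∧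
              Submodule.map (Matrix.toLin' ((B : Matrix (Fin 2) (Fin 2) ℝ))) L₂ = L₂) ∨
            (Submodule.map (Matrix.toLin' ((B : Matrix (Fin 2) (Fin 2) ℝ))) L₁ = L₂ ∧
              Submodule.map (Matrix.toLin' ((B : Matrix (Fin 2) (Fin 2) ℝ))) L₂ = L₁)) := by
  
  obtain ⟨lam, hq, hne⟩ := stmt10_exists_lam htr
  obtain ⟨h0, hsq1, hsq1', hsqne⟩ := stmt10_scalars hne
  have hinv : lam⁻¹ = Matrix.trace (A : Matrix (Fin 2) (Fin 2) ℝ) - lam := by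
    field_simp
    linear_combination hq
  have hq' : (lam⁻¹) ^ 2 - Matrix.trace (A : Matrix (Fin 2) (Fin 2) ℝ) * lam⁻¹ + 1 = 0 := by
    rw [hinv]; linear_combination hq
  obtain ⟨v₁, hv₁ne, hv₁⟩ := stmt10_eigvec A hq
  obtain ⟨v₂, hv₂ne, hv₂⟩ := stmt10_eigvec A hq'
  have hv₁' : stmt10toL A v₁ = lam • v₁ := hv₁
  have hv₂' : stmt10toL A v₂ = lam⁻¹ • v₂ := hv₂
  -- linear independence of the two eigenvectors
  have hind : LinearIndependent ℝ ![v₁, v₂] := by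
    rw [LinearIndependent.pair_iff' hv₁ne]
    intro a hav
    have h1 := congrArg (stmt10toL A) hav
    rw [map_smul, hv₁', hv₂', ← hav] at h1
    have h2 : (a * (lam - lam⁻¹)) • v₁ = 0 := by
      have h3 := sub_eq_zero.mpr h1
      rw [show a • (lam • v₁) - lam⁻¹ • (a • v₁) = (a * (lam - lam⁻¹)) • v₁ from by
        module] at h3
      exact h3
    rcases smul_eq_zero.mp h2 with h3 | h3
    · rcases mul_eq_zero.mp h3 with h | h
      · rw [h, zero_smul] at hav; exact hv₂ne hav.symm
      · exact hne (sub_eq_zero.mp h)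
    · exact hv₁ne h3
  have hcard : Fintype.card (Fin 2) = finrank ℝ (Fin 2 → ℝ) := by simp
  set bas := basisOfLinearIndependentOfCardEqFinrank hind hcard with hbasdef
  have hbas : ⇑bas = ![v₁, v₂] := coe_basisOfLinearIndependentOfCardEqFinrank _ _
  have hbas0 : bas 0 = v₁ := by rw [hbas]; rfl
  have hbas1 : bas 1 = v₂ := by rw [hbas]; rfl
  -- coefficients of any element of SL(2,ℝ) in this basis
  have coeffs : ∀ C : SL(2, ℝ), ∃ a b c d : ℝ,
      stmt10toL C v₁ = a • v₁ + c • v₂ ∧ stmt10toL C v₂ = b • v₁ + d • v₂ ∧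
      a * d - b * c = 1 := by
    intro C
    refine ⟨bas.repr (stmt10toL C v₁) 0, bas.repr (stmt10toL C v₂) 0,
      bas.repr (stmt10toL C v₁) 1, bas.repr (stmt10toL C v₂) 1, ?_, ?_, ?_⟩
    · conv_lhs => rw [← Basis.sum_repr bas (stmt10toL C v₁)]
      rw [Fin.sum_univ_two, hbas0, hbas1]
    · conv_lhs => rw [← Basis.sum_repr bas (stmt10toL C v₂)]
      rw [Fin.sum_univ_two, hbas0, hbas1]
    · have hdet := stmt10toL_det C
      rw [← LinearMap.det_toMatrix bas] at hdet
      rw [Matrix.det_fin_two] at hdet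
      simp only [LinearMap.toMatrix_apply, hbas0, hbas1] at hdet
      exact hdet
  have uniq : ∀ a c a' c' : ℝ, a • v₁ + c • v₂ = a' • v₁ + c' • v₂ → a = a' ∧ c = c' := by
    intro a c a' c' h
    have h3 := sub_eq_zero.mpr h
    rw [show (a • v₁ + c • v₂) - (a' • v₁ + c' • v₂) = (a - a') • v₁ + (c - c') • v₂ from by
      module] at h3
    obtain ⟨e1, e2⟩ := LinearIndependent.pair_iff.mp hind _ _ h3
    exact ⟨sub_eq_zero.mp e1, sub_eq_zero.mp e2⟩
  -- eigenspaces
  have hm₁ : v₁ ∈ Module.End.eigenspace (Matrix.toLin' ((A : Matrix (Fin 2) (Fin 2) ℝ))) lam :=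
    Module.End.mem_eigenspace_iff.mpr hv₁
  have hm₂ : v₂ ∈ Module.End.eigenspace (Matrix.toLin' ((A : Matrix (Fin 2) (Fin 2) ℝ))) lam⁻¹ :=
    Module.End.mem_eigenspace_iff.mpr hv₂
  have hsp₁ : Submodule.span ℝ {v₁} ≤
      Module.End.eigenspace (Matrix.toLin' ((A : Matrix (Fin 2) (Fin 2) ℝ))) lam :=
    Submodule.span_le.mpr (Set.singleton_subset_iff.mpr hm₁)
  have hsp₂ : Submodule.span ℝ {v₂} ≤
      Module.End.eigenspace (Matrix.toLin' ((A : Matrix (Fin 2) (Fin 2) ℝ))) lam⁻¹ :=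
    Submodule.span_le.mpr (Set.singleton_subset_iff.mpr hm₂)
  have hdisj : Module.End.eigenspace (Matrix.toLin' ((A : Matrix (Fin 2) (Fin 2) ℝ))) lam ⊓
      Module.End.eigenspace (Matrix.toLin' ((A : Matrix (Fin 2) (Fin 2) ℝ))) lam⁻¹ = ⊥ := by
    rw [eq_bot_iff]
    intro x hx
    obtain ⟨hx1, hx2⟩ := Submodule.mem_inf.mp hx
    rw [Module.End.mem_eigenspace_iff] at hx1 hx2
    have h2 : (lam - lam⁻¹) • x = 0 := by rw [sub_smul, ← hx1, ← hx2, sub_self]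
    rcases smul_eq_zero.mp h2 with h3 | h3
    · exact absurd (sub_eq_zero.mp h3) hne
    · simpa using h3
  have hfin1 : finrank ℝ
      (Module.End.eigenspace (Matrix.toLin' ((A : Matrix (Fin 2) (Fin 2) ℝ))) lam) = 1 ∧
      finrank ℝ
      (Module.End.eigenspace (Matrix.toLin' ((A : Matrix (Fin 2) (Fin 2) ℝ))) lam⁻¹) = 1 := by
    have l1 : 1 ≤ finrank ℝ
        (Module.End.eigenspace (Matrix.toLin' ((A : Matrix (Fin 2) (Fin 2) ℝ))) lam) :=
      le_trans (le_of_eq (finrank_span_singleton hv₁ne).symm) (Submodule.finrank_mono hsp₁)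
    have l2 : 1 ≤ finrank ℝ
        (Module.End.eigenspace (Matrix.toLin' ((A : Matrix (Fin 2) (Fin 2) ℝ))) lam⁻¹) :=
      le_trans (le_of_eq (finrank_span_singleton hv₂ne).symm) (Submodule.finrank_mono hsp₂)
    have hsum := Submodule.finrank_sup_add_finrank_inf_eq
      (Module.End.eigenspace (Matrix.toLin' ((A : Matrix (Fin 2) (Fin 2) ℝ))) lam)
      (Module.End.eigenspace (Matrix.toLin' ((A : Matrix (Fin 2) (Fin 2) ℝ))) lam⁻¹)
    rw [hdisj, finrank_bot, add_zero] at hsum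
    have hle := le_trans (Submodule.finrank_le
      (Module.End.eigenspace (Matrix.toLin' ((A : Matrix (Fin 2) (Fin 2) ℝ))) lam ⊔
        Module.End.eigenspace (Matrix.toLin' ((A : Matrix (Fin 2) (Fin 2) ℝ))) lam⁻¹))
      (le_of_eq (by simp : finrank ℝ (Fin 2 → ℝ) = 2))
    omega
  have hE₁ : Module.End.eigenspace (Matrix.toLin' ((A : Matrix (Fin 2) (Fin 2) ℝ))) lam =
      Submodule.span ℝ {v₁} :=
    (Submodule.eq_of_le_of_finrank_eq hsp₁
      (by rw [finrank_span_singleton hv₁ne, hfin1.1])).symm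
  have hE₂ : Module.End.eigenspace (Matrix.toLin' ((A : Matrix (Fin 2) (Fin 2) ℝ))) lam⁻¹ =
      Submodule.span ℝ {v₂} :=
    (Submodule.eq_of_le_of_finrank_eq hsp₂
      (by rw [finrank_span_singleton hv₂ne, hfin1.2])).symm
  refine ⟨lam, hne, Module.End.hasEigenvalue_of_hasEigenvector ⟨hm₁, hv₁ne⟩,
    Module.End.hasEigenvalue_of_hasEigenvector ⟨hm₂, hv₂ne⟩, ?_⟩
  intro L₁ L₂ hL₁ hL₂
  subst hL₁; subst hL₂
  refine ⟨hfin1.1, hfin1.2, ?_⟩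
  intro B hB
  have mapspan : ∀ (C : SL(2, ℝ)) (w : Fin 2 → ℝ),
      Submodule.map (stmt10toL C) (Submodule.span ℝ {w}) = Submodule.span ℝ {stmt10toL C w} := by
    intro C w; rw [Submodule.map_span, Set.image_singleton]
  by_contra hnot
  obtain ⟨a, b, c, d, h1, h2, hdet⟩ := coeffs B
  have hbc : ¬(b = 0 ∧ c = 0) := by
    rintro ⟨hb, hc⟩
    apply hnot; left
    have ha0 : a ≠ 0 := by intro h; rw [h, hb] at hdet; simp at hdet
    have hd0 : d ≠ 0 := by intro h; rw [h, hc] at hdet; simp at hdet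
    rw [hc, zero_smul, add_zero] at h1
    rw [hb, zero_smul, zero_add] at h2
    constructor
    · show Submodule.map (stmt10toL B) _ = _
      rw [hE₁, mapspan, h1, Submodule.span_singleton_smul_eq (isUnit_iff_ne_zero.mpr ha0)]
    · show Submodule.map (stmt10toL B) _ = _
      rw [hE₂, mapspan, h2, Submodule.span_singleton_smul_eq (isUnit_iff_ne_zero.mpr hd0)]
  have had : ¬(a = 0 ∧ d = 0) := by
    rintro ⟨ha, hd⟩
    apply hnot; right
    have hb0 : b ≠ 0 := by intro h; rw [ha, h] at hdet; simp at hdet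
    have hc0 : c ≠ 0 := by intro h; rw [hd, h] at hdet; simp at hdet
    rw [ha, zero_smul, zero_add] at h1
    rw [hd, zero_smul, add_zero] at h2
    constructor
    · show Submodule.map (stmt10toL B) _ = _
      rw [hE₁, hE₂, mapspan, h1, Submodule.span_singleton_smul_eq (isUnit_iff_ne_zero.mpr hc0)]
    · show Submodule.map (stmt10toL B) _ = _
      rw [hE₁, hE₂, mapspan, h2, Submodule.span_singleton_smul_eq (isUnit_iff_ne_zero.mpr hb0)]
  -- iterated commutators
  set A' : N := ⟨A, hA⟩ with hA'def
  set x : ℕ → N := fun k => (fun C : N => ⁅C, A'⁆)^[k] ⟨B, hB⟩ with hxdef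
  have hxsucc : ∀ k, x (k + 1) = ⁅x k, A'⁆ := fun k => Function.iterate_succ_apply' _ _ _
  have hmem : ∀ k, x k ∈ (⊤ : Subgroup N).lowerCentralSeries k := by
    intro k; induction k with
    | zero => exact Subgroup.mem_top _
    | succ k ih =>
      rw [hxsucc]
      exact Subgroup.commutator_mem_commutator ih (Subgroup.mem_top _)
  have hbad : ∀ k, ∃ a b c d : ℝ,
      stmt10toL ↑(x k) v₁ = a • v₁ + c • v₂ ∧ stmt10toL ↑(x k) v₂ = b • v₁ + d • v₂ ∧
      a * d - b * c = 1 ∧ ¬(b = 0 ∧ c = 0) ∧ ¬(a = 0 ∧ d = 0) := by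
    intro k; induction k with
    | zero => exact ⟨a, b, c, d, h1, h2, hdet, hbc, had⟩
    | succ k ih =>
      obtain ⟨a', b', c', d', k1, k2, kdet, kbc, kad⟩ := ih
      have hcoe : (↑(x (k + 1)) : SL(2, ℝ)) = ⁅(↑(x k) : SL(2, ℝ)), A⁆ := by
        rw [hxsucc]; rfl
      obtain ⟨c1, c2⟩ := stmt10_comm A (↑(x k)) h0 hv₁' hv₂' k1 k2 kdet
      obtain ⟨ddet, dbc, dad⟩ := stmt10_badstep hne kdet kbc kad
      exact ⟨_, _, _, _, by rw [hcoe]; exact c1, by rw [hcoe]; exact c2, ddet, dbc, dad⟩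
  obtain ⟨n, hn⟩ := nilpotent_iff_lowerCentralSeries.mp (inferInstance : Group.IsNilpotent ↥N)
  have hxn : x n = 1 := by
    have := hmem n; rw [hn] at this; exact Subgroup.mem_bot.mp this
  obtain ⟨a', b', c', d', k1, k2, kdet, kbc, kad⟩ := hbad n
  rw [hxn, OneMemClass.coe_one, stmt10toL_one] at k1 k2
  have u1 := uniq a' c' 1 0 (by rw [one_smul, zero_smul, add_zero]; exact k1.symm)
  have u2 := uniq b' d' 0 1 (by rw [one_smul, zero_smul, zero_add]; exact k2.symm)
  exact kbc ⟨u2.1, u1.2⟩
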